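/- Soundness of STL robustness (discrete-time, finite formulas): for any discrete-time signal s : ℕ → ℝⁿ, time t, and STL formula φ built from predicates μ ≥ 0, negation, conjunction, and bounded until over finite integer intervals, if ρ(s,t,φ) > 0 then s,t ⊨ φ, and if ρ(s,t,φ) < 0 then s,t ⊭ φ. -/
import Mathlib

inductive STL (α : Type) : Type where
  | tru : STL α
  | atom : (α → ℝ) → STL α
  | not : STL α → STL α
  | and : STL α → STL α → STL α
  | untl : ℕ → ℕ → STL α → STL α → STL α

noncomputable def robust {α : Type} (s : ℕ → α) : STL α → ℕ → ℝ
  | .tru, _ => 1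
  | .atom μ, t => μ (s t)
  | .not φ, t => -(robust s φ t)
  | .and φ ψ, t => min (robust s φ t) (robust s ψ t)
  | .untl a b φ ψ, t =>
      sSup ((fun t' => min (robust s ψ t')
        (sInf ((fun t'' => robust s φ t'') '' Set.Icc t t'))) '' Set.Icc (t + a) (t + b))

def sat {α : Type} (s : ℕ → α) : STL α → ℕ → Prop
  | .tru, _ => True
  | .atom μ, t => 0 < μ (s t)
  | .not φ, t => ¬ sat s φ t
  | .and φ ψ, t => sat s φ t ∧ sat s ψ t
  | .untl a b φ ψ, t =>
      ∃ t' ∈ Set.Icc (t + a) (t + b), sat s ψ t' ∧ ∀ t'' ∈ Set.Icc t t', sat s φ t''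

theorem robust_soundness (n : ℕ) (s : ℕ → (Fin n → ℝ)) (t : ℕ)
    (φ : STL (Fin n → ℝ)) :
    (0 < robust s φ t → sat s φ t) ∧ (robust s φ t < 0 → ¬ sat s φ t) := by
  induction φ generalizing t with
  | tru => simp [robust, sat]
  | atom μ => exact ⟨id, fun h h' => by simp [robust, sat] at h h'; linarith⟩
  | not φ ih =>
    simp only [robust, sat]
    constructor
    · intro h; exact (ih t).2 (by linarith)
    · intro h; exact not_not_intro ((ih t).1 (by linarith))
  | and φ ψ ihφ ihψ =>
    simp only [robust, sat, lt_min_iff, min_lt_iff]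
    constructor
    · rintro ⟨h1, h2⟩; exact ⟨(ihφ t).1 h1, (ihψ t).1 h2⟩
    · rintro (h | h) ⟨h1, h2⟩
      · exact (ihφ t).2 h h1
      · exact (ihψ t).2 h h2
  | untl a b φ ψ ihφ ihψ =>
    set F : ℕ → ℝ := fun t' => min (robust s ψ t')
        (sInf ((fun t'' => robust s φ t'') '' Set.Icc t t')) with hF
    have hfin : ((fun t' => min (robust s ψ t')
        (sInf ((fun t'' => robust s φ t'') '' Set.Icc t t'))) '' Set.Icc (t + a) (t + b)).Finite :=
      (Set.finite_Icc _ _).image _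
    constructor
    · intro h
      have hne : (F '' Set.Icc (t + a) (t + b)).Nonempty := by
        by_contra hemp
        rw [Set.not_nonempty_iff_eq_empty] at hemp
        rw [robust, hemp] at h
        simp at h
      obtain ⟨t', ht', hxe⟩ := hne.csSup_mem hfin
      rw [robust, ← hxe] at h
      have hψ := lt_of_lt_of_le h (min_le_left _ _)
      have hinf := lt_of_lt_of_le h (min_le_right _ _)
      refine ⟨t', ht', (ihψ t').1 hψ, ?_⟩
      intro t'' ht''
      have hmem : robust s φ t'' ∈ (fun t'' => robust s φ t'') '' Set.Icc t t' :=
        ⟨t'', ht'', rfl⟩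
      have hbdd : BddBelow ((fun t'' => robust s φ t'') '' Set.Icc t t') :=
        ((Set.finite_Icc _ _).image _).bddBelow
      exact (ihφ t'').1 (lt_of_lt_of_le hinf (csInf_le hbdd hmem))
    · intro h hsat
      obtain ⟨t', ht', hψ, hφ⟩ := hsat
      have hle : F t' ≤ robust s (STL.untl a b φ ψ) t := by
        rw [robust]
        exact le_csSup hfin.bddAbove ⟨t', ht', rfl⟩
      have hFneg : F t' < 0 := lt_of_le_of_lt hle h
      rw [hF] at hFneg
      simp only [min_lt_iff] at hFneg
      rcases hFneg with h1 | h1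
      · exact (ihψ t').2 h1 hψ
      · have hne : ((fun t'' => robust s φ t'') '' Set.Icc t t').Nonempty := by
          refine ⟨robust s φ t, t, ?_, rfl⟩
          exact ⟨le_refl t, le_trans (Nat.le_add_right t a) ht'.1⟩
        obtain ⟨t'', ht'', hxe⟩ := hne.csInf_mem ((Set.finite_Icc _ _).image _)
        rw [← hxe] at h1
        exact (ihφ t'').2 h1 (hφ t'' ht'')
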